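/- A distal continuous map on a compact metric space with at least two points cannot have mean ergodic shadowing. -/

import Mathlib

open Filter Metric

noncomputable def cnt (E : Set ℕ) (n : ℕ) : ℝ :=
  ∑ i ∈ Finset.range n, Set.indicator E (fun _ => (1 : ℝ)) i

def DensityZero (E : Set ℕ) : Prop :=
  Filter.Tendsto (fun n : ℕ => cnt E n / n) Filter.atTop (nhds 0)

noncomputable def upperDensity (E : Set ℕ) : ℝ :=
  Filter.limsup (fun n : ℕ => cnt E n / n) Filter.atTop

noncomputable def lowerDensity (E : Set ℕ) : ℝ :=
  Filter.liminf (fun n : ℕ => cnt E n / n) Filter.atTop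

variable {X : Type*}

def ErgodicPseudoOrbit [MetricSpace X] (f : X → X) (δ : ℝ) (ξ : ℕ → X) : Prop :=
  DensityZero {i | δ ≤ dist (f (ξ i)) (ξ (i + 1))}

def AvgShadows [MetricSpace X] (f : X → X) (ε : ℝ) (p : X) (ξ : ℕ → X) : Prop :=
  Filter.limsup (fun n : ℕ => (∑ i ∈ Finset.range n, dist (f^[i] p) (ξ i)) / n) Filter.atTop < ε

def MeanErgodicShadowingAvg [MetricSpace X] (f : X → X) : Prop :=
  ∀ ε > 0, ∃ δ > 0, ∀ ξ : ℕ → X, ErgodicPseudoOrbit f δ ξ → ∃ p : X, AvgShadows f ε p ξ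

def MeanErgodicShadowingDens [MetricSpace X] (f : X → X) : Prop :=
  ∀ ε > 0, ∃ δ > 0, ∀ ξ : ℕ → X, ErgodicPseudoOrbit f δ ξ →
    ∃ p : X, upperDensity {i | ε ≤ dist (f^[i] p) (ξ i)} < ε

def Shadowing [MetricSpace X] (f : X → X) : Prop :=
  ∀ ε > 0, ∃ δ > 0, ∀ ξ : ℕ → X, (∀ i, dist (f (ξ i)) (ξ (i + 1)) < δ) →
    ∃ p : X, ∀ i, dist (f^[i] p) (ξ i) < ε


set_option linter.unusedSectionVars false
set_option maxHeartbeats 1000000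

section S1
open Finset Classical in
lemma cnt_eq_card (E : Set ℕ) (n : ℕ) :
    cnt E n = ((Finset.range n).filter (fun i => i ∈ E)).card := by
  classical
  unfold cnt
  rw [Finset.card_filter]
  push_cast
  refine Finset.sum_congr rfl fun i _ => ?_
  by_cases h : i ∈ E <;> simp [Set.indicator, h]

lemma cnt_nonneg (E : Set ℕ) (n : ℕ) : 0 ≤ cnt E n := by
  classical
  rw [cnt_eq_card]; positivity

lemma cnt_le_n (E : Set ℕ) (n : ℕ) : cnt E n ≤ n := by
  classical
  rw [cnt_eq_card]
  exact_mod_cast Nat.cast_le.mpr ((Finset.card_filter_le _ _).trans_eq (Finset.card_range n))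

lemma cnt_mono_set {A B : Set ℕ} (h : A ⊆ B) (n : ℕ) : cnt A n ≤ cnt B n := by
  classical
  rw [cnt_eq_card, cnt_eq_card]
  have : (Finset.range n).filter (fun i => i ∈ A) ⊆ (Finset.range n).filter (fun i => i ∈ B) := by
    intro i hi
    simp only [Finset.mem_filter] at hi ⊢
    exact ⟨hi.1, h hi.2⟩
  exact_mod_cast Finset.card_le_card this

end S1

section S1b

lemma upperDensity_eventually_bound {E : Set ℕ} {ε : ℝ} (h : upperDensity E < ε) :
    ∃ N : ℕ, ∀ n ≥ N, 1 ≤ n → cnt E n < ε * n := by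
  have hb : Filter.IsBoundedUnder (· ≤ ·) Filter.atTop (fun n : ℕ => cnt E n / n) := by
    refine Filter.isBoundedUnder_of ⟨1, fun n => ?_⟩
    rcases Nat.eq_zero_or_pos n with h0 | h0
    · simp [h0, cnt]
    · have : (0:ℝ) < n := by exact_mod_cast h0
      calc cnt E n / n ≤ (n:ℝ)/n := by gcongr; exact cnt_le_n E n
        _ ≤ 1 := by rw [div_self this.ne']
  have hev := Filter.eventually_lt_of_limsup_lt h hb
  rw [Filter.eventually_atTop] at hev
  obtain ⟨N, hN⟩ := hev
  refine ⟨N, fun n hn h1 => ?_⟩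
  have hpos : (0:ℝ) < n := by exact_mod_cast h1
  have := hN n hn
  calc cnt E n = cnt E n / n * n := by field_simp
    _ < ε * n := by exact mul_lt_mul_of_pos_right this hpos

lemma densityZero_mono {A B : Set ℕ} (h : A ⊆ B) (hB : DensityZero B) : DensityZero A := by
  unfold DensityZero at *
  refine squeeze_zero (f := fun n : ℕ => cnt A n / n) (g := fun n : ℕ => cnt B n / n)
    (fun n => ?_) (fun n => ?_) hB
  · exact div_nonneg (cnt_nonneg A n) (Nat.cast_nonneg n)
  · rcases Nat.eq_zero_or_pos n with h0 | h0
    · simp [h0]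
    · have hp : (0:ℝ) < n := by exact_mod_cast h0
      exact (div_le_div_iff_of_pos_right hp).mpr (cnt_mono_set h n)

/-- if the counting function is at most `m + n/m + 1` for every `m ≥ 1`, density is zero -/
lemma densityZero_of_bound {E : Set ℕ}
    (h : ∀ m : ℕ, 1 ≤ m → ∀ n : ℕ, cnt E n ≤ m + (n:ℝ)/m + 1) : DensityZero E := by
  unfold DensityZero
  rw [Metric.tendsto_atTop]
  intro η hη
  obtain ⟨m0, hm0⟩ := exists_nat_gt (3/η)
  set m : ℕ := m0 + 1 with hmdef
  have hm : 3/η < m := by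
    have : (m0:ℝ) ≤ m := by exact_mod_cast Nat.le_succ m0
    linarith
  have hm1 : 1 ≤ m := Nat.succ_le_succ (Nat.zero_le m0)
  have hmpos : (0:ℝ) < m := by exact_mod_cast hm1
  obtain ⟨N, hN⟩ := exists_nat_gt ((3:ℝ) * (m+1) / η)
  refine ⟨max N 1, fun n hn => ?_⟩
  have hn1 : 1 ≤ n := le_trans (le_max_right _ _) hn
  have hnN : (N:ℝ) ≤ n := by exact_mod_cast le_trans (le_max_left _ _) hn
  have hnpos : (0:ℝ) < n := by exact_mod_cast hn1
  rw [Real.dist_eq, sub_zero]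
  have h0 : 0 ≤ cnt E n / n := div_nonneg (cnt_nonneg E n) (Nat.cast_nonneg n)
  rw [abs_of_nonneg h0]
  have hb := h m hm1 n
  have key : cnt E n / n ≤ ((m:ℝ)+1)/n + 1/m := by
    have step1 : cnt E n / n ≤ ((m:ℝ) + n/m + 1)/n := (div_le_div_iff_of_pos_right hnpos).mpr hb
    have step2 : ((m:ℝ) + (n:ℝ)/m + 1)/n = ((m:ℝ)+1)/n + 1/m := by
      field_simp
      ring
    rw [step2] at step1
    exact step1
  have h1 : ((m:ℝ)+1)/n < η/3 + η/3 := by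
    have : ((m:ℝ)+1)/n < η/3 := by
      rw [div_lt_iff₀ hnpos]
      have hNlt : (3:ℝ) * (m+1) / η < n := lt_of_lt_of_le hN hnN
      rw [div_lt_iff₀ (by positivity)] at hNlt
      nlinarith
    linarith [this, hη]
  have h2 : (1:ℝ)/m < η/3 := by
    rw [div_lt_iff₀ hmpos]
    rw [div_lt_iff₀ hη] at hm
    nlinarith
  linarith

end S1b



section Ellis
variable {Z : Type*} [MetricSpace Z] [CompactSpace Z]

/-- The Ellis semigroup: pointwise closure of the iterates. -/
def ellisE (h : Z → Z) : Set (Z → Z) := closure (Set.range fun n : ℕ => h^[n])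

lemma ellisE_compact (h : Z → Z) : IsCompact (ellisE h) :=
  isClosed_closure.isCompact

lemma ellisE_closed (h : Z → Z) : IsClosed (ellisE h) := isClosed_closure

lemma ellisE_nonempty (h : Z → Z) : (ellisE h).Nonempty :=
  ⟨h^[0], subset_closure ⟨0, rfl⟩⟩

lemma iterate_mem_ellisE (h : Z → Z) (n : ℕ) : h^[n] ∈ ellisE h :=
  subset_closure ⟨n, rfl⟩

lemma continuous_rightComp (φ : Z → Z) : Continuous fun g : Z → Z => g ∘ φ :=
  continuous_pi fun z => continuous_apply (φ z)

lemma continuous_leftComp {ψ : Z → Z} (hψ : Continuous ψ) :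
    Continuous fun g : Z → Z => ψ ∘ g :=
  continuous_pi fun z => hψ.comp (continuous_apply z)

lemma leftIter_comp_mem (h : Z → Z) (hc : Continuous h) {ψ : Z → Z} (hψ : ψ ∈ ellisE h)
    (n : ℕ) : h^[n] ∘ ψ ∈ ellisE h := by
  have hcn : Continuous (h^[n]) := hc.iterate n
  have : (fun g : Z → Z => h^[n] ∘ g) '' ellisE h ⊆
      closure ((fun g : Z → Z => h^[n] ∘ g) '' Set.range fun m : ℕ => h^[m]) :=
    (image_closure_subset_closure_image (continuous_leftComp hcn))
  have h2 : ((fun g : Z → Z => h^[n] ∘ g) '' Set.range fun m : ℕ => h^[m]) ⊆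
      Set.range fun m : ℕ => h^[m] := by
    rintro _ ⟨_, ⟨m, rfl⟩, rfl⟩
    exact ⟨n + m, by simp [Function.iterate_add]⟩
  have h3 : h^[n] ∘ ψ ∈ closure ((fun g : Z → Z => h^[n] ∘ g) '' Set.range fun m : ℕ => h^[m]) :=
    this ⟨ψ, hψ, rfl⟩
  exact closure_mono h2 h3

lemma comp_mem_ellisE (h : Z → Z) (hc : Continuous h) {φ ψ : Z → Z}
    (hφ : φ ∈ ellisE h) (hψ : ψ ∈ ellisE h) : φ ∘ ψ ∈ ellisE h := by
  have : (fun g : Z → Z => g ∘ ψ) '' ellisE h ⊆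
      closure ((fun g : Z → Z => g ∘ ψ) '' Set.range fun m : ℕ => h^[m]) :=
    image_closure_subset_closure_image (continuous_rightComp ψ)
  have h2 : ((fun g : Z → Z => g ∘ ψ) '' Set.range fun m : ℕ => h^[m]) ⊆ ellisE h := by
    rintro _ ⟨_, ⟨m, rfl⟩, rfl⟩
    exact leftIter_comp_mem h hc hψ m
  have h3 : φ ∘ ψ ∈ closure ((fun g : Z → Z => g ∘ ψ) '' Set.range fun m : ℕ => h^[m]) :=
    this ⟨φ, hφ, rfl⟩
  exact (ellisE_closed h).closure_subset_iff.mpr h2 h3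

end Ellis

section EllisZorn
variable {Z : Type*} [MetricSpace Z] [CompactSpace Z]

/-- helper: Zorn for families of nonempty closed subsets of a fixed compact closed `E`
stable under a property `P` closed under chain-intersections. -/
lemma exists_minimal_closed (h : Z → Z) (𝒮 : Set (Set (Z → Z)))
    (h𝒮 : ∀ L ∈ 𝒮, L.Nonempty ∧ IsClosed L)
    (hchain : ∀ c ⊆ 𝒮, IsChain (· ⊆ ·) c → c.Nonempty → ⋂₀ c ∈ 𝒮)
    (E₀ : Set (Z → Z)) (hE₀ : E₀ ∈ 𝒮) :
    ∃ L ∈ 𝒮, L ⊆ E₀ ∧ ∀ A ∈ 𝒮, A ⊆ L → A = L := by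
  have H : ∀ c ⊆ 𝒮, IsChain (· ⊆ ·) c → c.Nonempty → ∃ lb ∈ 𝒮, ∀ s ∈ c, lb ⊆ s := by
    intro c hc hchn hne
    exact ⟨⋂₀ c, hchain c hc hchn hne, fun s hs => Set.sInter_subset_of_mem hs⟩
  obtain ⟨m, hm1, hm2⟩ := zorn_superset_nonempty 𝒮 H E₀ hE₀
  exact ⟨m, hm2.prop, hm1, fun A hA hAm => hm2.eq_of_subset hA hAm⟩

/-- intersection of a chain of nonempty compact sets is nonempty etc. -/
lemma chain_sInter_nonempty {c : Set (Set (Z → Z))}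
    (hne : c.Nonempty) (hchn : IsChain (· ⊆ ·) c)
    (h1 : ∀ L ∈ c, L.Nonempty) (h2 : ∀ L ∈ c, IsClosed L) :
    (⋂₀ c).Nonempty := by
  haveI : Nonempty c := hne.to_subtype
  apply IsCompact.nonempty_sInter_of_directed_nonempty_isCompact_isClosed
  · intro s hs t ht
    rcases hchn.total hs ht with h | h
    · exact ⟨s, hs, le_refl _, h⟩
    · exact ⟨t, ht, h, le_refl _⟩
  · exact h1
  · exact fun L hL => (h2 L hL).isCompact
  · exact h2


/-- Idempotent in a nonempty compact sub-semigroup (Ellis–Namakura). -/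
lemma exists_idempotent_comp (K : Set (Z → Z)) (hKne : K.Nonempty) (hKcl : IsClosed K)
    (hKmul : ∀ a ∈ K, ∀ b ∈ K, a ∘ b ∈ K) : ∃ u ∈ K, u ∘ u = u := by
  classical
  set 𝒯 : Set (Set (Z → Z)) :=
    {S | S.Nonempty ∧ IsClosed S ∧ S ⊆ K ∧ ∀ a ∈ S, ∀ b ∈ S, a ∘ b ∈ S} with h𝒯
  have hK𝒯 : K ∈ 𝒯 := ⟨hKne, hKcl, le_refl _, hKmul⟩
  obtain ⟨S, hS, _, hSmin⟩ := exists_minimal_closed (fun z => z) 𝒯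
    (fun L hL => ⟨hL.1, hL.2.1⟩)
    (by
      intro c hc hchn hne
      refine ⟨chain_sInter_nonempty hne hchn (fun L hL => (hc hL).1) (fun L hL => (hc hL).2.1),
        isClosed_sInter (fun L hL => (hc hL).2.1), ?_, ?_⟩
      · obtain ⟨L0, hL0⟩ := hne
        exact (Set.sInter_subset_of_mem hL0).trans (hc hL0).2.2.1
      · intro a ha b hb
        rw [Set.mem_sInter] at *
        intro L hL
        exact (hc hL).2.2.2 a (ha L hL) b (hb L hL))
    K hK𝒯
  obtain ⟨hSne, hScl, hSK, hSmul⟩ := hS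
  obtain ⟨s, hs⟩ := hSne
  -- step 1 : (· ∘ s) '' S = S
  have h1 : (fun x : Z → Z => x ∘ s) '' S = S := by
    apply hSmin
    · refine ⟨⟨s ∘ s, ⟨s, hs, rfl⟩⟩, (hScl.isCompact.image (continuous_rightComp s)).isClosed,
        ?_, ?_⟩
      · rintro _ ⟨a, ha, rfl⟩
        exact hSK (hSmul a ha s hs)
      · rintro _ ⟨a, ha, rfl⟩ _ ⟨b, hb, rfl⟩
        exact ⟨a ∘ s ∘ b, hSmul a ha _ (hSmul s hs b hb), rfl⟩
    · rintro _ ⟨a, ha, rfl⟩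
      exact hSmul a ha s hs
  -- step 2 : {x ∈ S | x ∘ s = s} = S
  have h2 : {x | x ∈ S ∧ x ∘ s = s} = S := by
    apply hSmin
    · have hsne : ∃ a ∈ S, a ∘ s = s := by
        have : s ∈ (fun x : Z → Z => x ∘ s) '' S := h1.symm ▸ hs
        obtain ⟨a, ha, has⟩ := this
        exact ⟨a, ha, has⟩
      obtain ⟨a, ha, has⟩ := hsne
      refine ⟨⟨a, ha, has⟩, ?_, fun x hx => hSK hx.1, ?_⟩
      · have : {x : Z → Z | x ∈ S ∧ x ∘ s = s} = S ∩ (fun x : Z → Z => x ∘ s) ⁻¹' {s} := by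
          ext x; simp [Set.mem_inter_iff]
        rw [this]
        exact hScl.inter (IsClosed.preimage (continuous_rightComp s) isClosed_singleton)
      · rintro a ⟨haS, has⟩ b ⟨hbS, hbs⟩
        refine ⟨hSmul a haS b hbS, ?_⟩
        show a ∘ (b ∘ s) = s
        rw [hbs, has]
    · intro x hx
      exact hx.1
  have : s ∈ {x | x ∈ S ∧ x ∘ s = s} := h2.symm ▸ hs
  exact ⟨s, hSK hs, this.2⟩


lemma liminf_eq_zero_of_frequently_small {u : ℕ → ℝ} (hnn : ∀ n, 0 ≤ u n)
    (hbd : ∃ C, ∀ n, u n ≤ C)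
    (hfreq : ∀ η : ℝ, 0 < η → ∀ N : ℕ, ∃ n, N ≤ n ∧ u n < η) :
    Filter.liminf u Filter.atTop = 0 := by
  obtain ⟨C, hC⟩ := hbd
  have hlow : Filter.IsBoundedUnder (· ≥ ·) Filter.atTop u :=
    Filter.isBoundedUnder_of ⟨0, fun n => hnn n⟩
  have hup : Filter.IsBoundedUnder (· ≤ ·) Filter.atTop u :=
    Filter.isBoundedUnder_of ⟨C, fun n => hC n⟩
  have hle : ∀ η : ℝ, 0 < η → Filter.liminf u Filter.atTop ≤ η := by
    intro η hη
    refine Filter.liminf_le_of_frequently_le ?_ hlow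
    rw [Filter.frequently_atTop]
    intro N
    obtain ⟨n, hn1, hn2⟩ := hfreq η hη N
    exact ⟨n, hn1, hn2.le⟩
  have h0 : Filter.liminf u Filter.atTop ≤ 0 := by
    by_contra hcon
    push_neg at hcon
    have := hle (Filter.liminf u Filter.atTop / 2) (by linarith)
    linarith
  have h1 : 0 ≤ Filter.liminf u Filter.atTop :=
    Filter.le_liminf_of_le (hup.isCoboundedUnder_ge) (Filter.Eventually.of_forall hnn)
  linarith

/-- Existence of a minimal closed left ideal with an element acting as identity
(on a distal system). This is the heart of the Ellis theory we need. -/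
theorem ellis_idempotent_identity (h : Z → Z) (hc : Continuous h)
    (hdist : ∀ u v : Z, Filter.liminf (fun n : ℕ => dist (h^[n] u) (h^[n] v))
      Filter.atTop = 0 → u = v) :
    ∃ u ∈ ellisE h, (∀ z : Z, u z = z) ∧
      ∀ φ ∈ ellisE h, ∃ χ ∈ ellisE h, χ ∘ (φ ∘ u) = u := by
  classical
  set 𝒮 : Set (Set (Z → Z)) :=
    {L | L.Nonempty ∧ IsClosed L ∧ L ⊆ ellisE h ∧ ∀ φ ∈ ellisE h, ∀ g ∈ L, φ ∘ g ∈ L} with h𝒮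
  have hE𝒮 : ellisE h ∈ 𝒮 := ⟨ellisE_nonempty h, ellisE_closed h, le_refl _,
    fun φ hφ g hg => comp_mem_ellisE h hc hφ hg⟩
  obtain ⟨L, hL, _, hLmin⟩ := exists_minimal_closed h 𝒮
    (fun L hL => ⟨hL.1, hL.2.1⟩)
    (by
      intro c hcs hchn hne
      refine ⟨chain_sInter_nonempty hne hchn (fun L hL => (hcs hL).1) (fun L hL => (hcs hL).2.1),
        isClosed_sInter (fun L hL => (hcs hL).2.1), ?_, ?_⟩
      · obtain ⟨L0, hL0⟩ := hne
        exact (Set.sInter_subset_of_mem hL0).trans (hcs hL0).2.2.1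
      · intro φ hφ g hg
        rw [Set.mem_sInter] at *
        intro L hL
        exact (hcs hL).2.2.2 φ hφ g (hg L hL))
    (ellisE h) hE𝒮
  obtain ⟨hLne, hLcl, hLE, hLid⟩ := hL
  have KF : ∀ g ∈ L, (fun x : Z → Z => x ∘ g) '' ellisE h = L := by
    intro g hg
    apply hLmin
    · refine ⟨⟨g, ⟨h^[0], iterate_mem_ellisE h 0, by simp⟩⟩,
        ((ellisE_compact h).image (continuous_rightComp g)).isClosed, ?_, ?_⟩
      · rintro _ ⟨φ, hφ, rfl⟩
        exact comp_mem_ellisE h hc hφ (hLE hg)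
      · rintro φ hφ _ ⟨ψ, hψ, rfl⟩
        exact ⟨φ ∘ ψ, comp_mem_ellisE h hc hφ hψ, rfl⟩
    · rintro _ ⟨φ, hφ, rfl⟩
      exact hLid φ hφ g hg
  obtain ⟨u, huL, huu⟩ := exists_idempotent_comp L hLne hLcl
    (fun a ha b hb => hLid a (hLE ha) b hb)
  have huE : u ∈ ellisE h := hLE huL
  -- u lies in the closure of each tail of the iterates
  have hCN : ∀ N : ℕ, u ∈ closure {g : Z → Z | ∃ n, N ≤ n ∧ g = h^[n]} := by
    intro N
    set C : Set (Z → Z) := {g | ∃ n, N ≤ n ∧ g = h^[n]} with hC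
    have hNu : h^[N] ∘ u ∈ L := hLid _ (iterate_mem_ellisE h N) u huL
    have hu2 : u ∈ (fun x : Z → Z => x ∘ (h^[N] ∘ u)) '' ellisE h := (KF _ hNu).symm ▸ huL
    obtain ⟨φ, hφ, hφu⟩ := hu2
    have hψ : φ ∘ h^[N] ∈ closure C := by
      have himg : (fun g : Z → Z => g ∘ h^[N]) '' ellisE h ⊆
          closure ((fun g : Z → Z => g ∘ h^[N]) '' Set.range fun m : ℕ => h^[m]) :=
        image_closure_subset_closure_image (continuous_rightComp _)
      have hsub : ((fun g : Z → Z => g ∘ h^[N]) '' Set.range fun m : ℕ => h^[m]) ⊆ C := by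
        rintro _ ⟨_, ⟨m, rfl⟩, rfl⟩
        exact ⟨m + N, Nat.le_add_left N m, (Function.iterate_add h m N).symm ▸ rfl⟩
      exact closure_mono hsub (himg ⟨φ, hφ, rfl⟩)
    have hnu : ∀ n, N ≤ n → h^[n] ∘ u ∈ closure C := by
      intro n hn
      have hcn : Continuous (h^[n]) := hc.iterate n
      have himg : (fun g : Z → Z => h^[n] ∘ g) '' ellisE h ⊆
          closure ((fun g : Z → Z => h^[n] ∘ g) '' Set.range fun m : ℕ => h^[m]) :=
        image_closure_subset_closure_image (continuous_leftComp hcn)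
      have hsub : ((fun g : Z → Z => h^[n] ∘ g) '' Set.range fun m : ℕ => h^[m]) ⊆ C := by
        rintro _ ⟨_, ⟨m, rfl⟩, rfl⟩
        exact ⟨n + m, le_trans hn (Nat.le_add_right n m), by simp [Function.iterate_add]⟩
      exact closure_mono hsub (himg ⟨u, huE, rfl⟩)
    have hu3 : u ∈ closure ((fun g : Z → Z => g ∘ u) '' C) := by
      have himg2 : (fun g : Z → Z => g ∘ u) '' closure C ⊆
          closure ((fun g : Z → Z => g ∘ u) '' C) :=
        image_closure_subset_closure_image (continuous_rightComp u)
      have hmem : (φ ∘ h^[N]) ∘ u ∈ closure ((fun g : Z → Z => g ∘ u) '' C) :=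
        himg2 ⟨_, hψ, rfl⟩
      have heq : (φ ∘ h^[N]) ∘ u = u := hφu
      rwa [heq] at hmem
    have hsub2 : (fun g : Z → Z => g ∘ u) '' C ⊆ closure C := by
      rintro _ ⟨_, ⟨n, hn, rfl⟩, rfl⟩
      exact hnu n hn
    exact (closure_minimal hsub2 isClosed_closure) hu3
  -- distality forces u to be the identity
  obtain ⟨Cb, hCb⟩ : ∃ Cb : ℝ, ∀ x y : Z, dist x y ≤ Cb := by
    obtain ⟨Cb, hCb⟩ := (Metric.isBounded_iff).mp (isCompact_univ (X := Z)).isBounded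
    exact ⟨Cb, fun x y => hCb trivial trivial⟩
  have huz : ∀ z : Z, u z = z := by
    intro z
    have huuz : u (u z) = u z := congrFun huu z
    have key : ∀ η : ℝ, 0 < η → ∀ N : ℕ,
        ∃ n, N ≤ n ∧ dist (h^[n] z) (h^[n] (u z)) < η := by
      intro η hη N
      set O : Set (Z → Z) :=
        {ψ | dist (ψ z) (u z) < η/2 ∧ dist (ψ (u z)) (u z) < η/2} with hO
      have hOopen : IsOpen O := by
        apply IsOpen.inter
        · exact (isOpen_ball.preimage (continuous_apply z) :
            IsOpen ((fun ψ : Z → Z => ψ z) ⁻¹' Metric.ball (u z) (η/2)))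
        · exact (isOpen_ball.preimage (continuous_apply (u z)) :
            IsOpen ((fun ψ : Z → Z => ψ (u z)) ⁻¹' Metric.ball (u z) (η/2)))
      have hOu : u ∈ O := by
        constructor <;> · simp only [hO, Set.mem_setOf_eq, huuz, dist_self]; positivity
      have := hCN N
      rw [_root_.mem_closure_iff] at this
      obtain ⟨ψ, hψO, hψC⟩ := this O hOopen hOu
      obtain ⟨n, hn, rfl⟩ := hψC
      refine ⟨n, hn, ?_⟩
      calc dist (h^[n] z) (h^[n] (u z))
          ≤ dist (h^[n] z) (u z) + dist (u z) (h^[n] (u z)) := dist_triangle _ _ _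
        _ < η/2 + η/2 := by
            have h1 := hψO.1
            have h2 := hψO.2
            rw [dist_comm (u z)]
            exact add_lt_add h1 h2
        _ = η := by ring
    have h0 : Filter.liminf (fun n : ℕ => dist (h^[n] z) (h^[n] (u z))) Filter.atTop = 0 :=
      liminf_eq_zero_of_frequently_small (fun n => dist_nonneg)
        ⟨Cb, fun n => hCb _ _⟩ key
    exact (hdist z (u z) h0).symm
  refine ⟨u, huE, huz, ?_⟩
  intro φ hφ
  have hφuL : φ ∘ u ∈ L := hLid φ hφ u huL
  have : u ∈ (fun x : Z → Z => x ∘ (φ ∘ u)) '' ellisE h := (KF _ hφuL).symm ▸ huL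
  obtain ⟨χ, hχ, hχu⟩ := this
  exact ⟨χ, hχ, hχu⟩



/-- Distal maps on compact metric spaces have syndetic return times to any
neighbourhood of any point (every point is almost periodic). -/
theorem syndetic_return (h : Z → Z) (hc : Continuous h)
    (hdist : ∀ u v : Z, Filter.liminf (fun n : ℕ => dist (h^[n] u) (h^[n] v))
      Filter.atTop = 0 → u = v)
    (z : Z) (U : Set Z) (hU : IsOpen U) (hzU : z ∈ U) :
    ∃ K : ℕ, 0 < K ∧ ∀ m : ℕ, ∃ j, m ≤ j ∧ j < m + K ∧ h^[j] z ∈ U := by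
  classical
  obtain ⟨u, huE, huz, hmin⟩ := ellis_idempotent_identity h hc hdist
  -- every point of the orbit closure of z maps back into U under some iterate
  have horb : ∀ y, y ∈ closure (Set.range fun n : ℕ => h^[n] z) → ∃ n, h^[n] y ∈ U := by
    intro y hy
    -- produce φ ∈ ellisE h with φ z = y
    rw [mem_closure_iff_seq_limit] at hy
    obtain ⟨w, hw1, hw2⟩ := hy
    choose nn hnn using hw1
    set F : ℕ → (Z → Z) := fun i => h^[nn i] with hF
    have hle : Filter.map F Filter.atTop ≤ Filter.principal (ellisE h) := by
      rw [Filter.le_principal_iff]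
      rw [Filter.mem_map]
      have : (F ⁻¹' ellisE h) = Set.univ := by
        ext i
        simp [hF, iterate_mem_ellisE h (nn i)]
      rw [this]
      exact Filter.univ_mem
    obtain ⟨φ, hφE, hφcl⟩ := (ellisE_compact h).exists_clusterPt hle
    have hφz : φ z = y := by
      by_contra hne
      have hd : 0 < dist (φ z) y := dist_pos.mpr hne
      have hnbhd : {ψ : Z → Z | dist (ψ z) (φ z) < dist (φ z) y / 2} ∈ nhds φ := by
        have : IsOpen {ψ : Z → Z | dist (ψ z) (φ z) < dist (φ z) y / 2} :=
          (isOpen_ball.preimage (continuous_apply z) :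
            IsOpen ((fun ψ : Z → Z => ψ z) ⁻¹' Metric.ball (φ z) (dist (φ z) y / 2)))
        exact this.mem_nhds (by simp [hd])
      have hfreq : ∃ᶠ i in Filter.atTop, F i ∈
          {ψ : Z → Z | dist (ψ z) (φ z) < dist (φ z) y / 2} :=
        (mapClusterPt_iff_frequently.mp hφcl) _ hnbhd
      have hev : ∀ᶠ i in Filter.atTop, dist (w i) y < dist (φ z) y / 2 := by
        have := Metric.tendsto_atTop.mp hw2 (dist (φ z) y / 2) (by linarith)
        rw [Filter.eventually_atTop]
        obtain ⟨N, hN⟩ := this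
        exact ⟨N, fun i hi => by simpa [dist_comm] using hN i hi⟩
      obtain ⟨i, hi1, hi2⟩ := (hfreq.and_eventually hev).exists
      have hwF : F i z = w i := hnn i
      rw [Set.mem_setOf_eq, hwF] at hi1
      have : dist (φ z) y ≤ dist (φ z) (w i) + dist (w i) y := dist_triangle _ _ _
      rw [dist_comm (φ z) (w i)] at this
      linarith
    -- use the minimal ideal to come back
    obtain ⟨χ, hχE, hχu⟩ := hmin φ hφE
    have hχy : χ y = z := by
      have h2 := congrFun hχu z
      simp only [Function.comp_apply] at h2
      rw [huz z] at h2
      rw [← hφz]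
      exact h2
    -- χ y belongs to the closure of the orbit of y
    have hχyc : χ y ∈ closure (Set.range fun n : ℕ => h^[n] y) := by
      have himg : (fun ψ : Z → Z => ψ y) '' ellisE h ⊆
          closure ((fun ψ : Z → Z => ψ y) '' Set.range fun n : ℕ => h^[n]) :=
        image_closure_subset_closure_image (continuous_apply y)
      have hsub : ((fun ψ : Z → Z => ψ y) '' Set.range fun n : ℕ => h^[n]) ⊆
          Set.range fun n : ℕ => h^[n] y := by
        rintro _ ⟨_, ⟨n, rfl⟩, rfl⟩
        exact ⟨n, rfl⟩
      exact closure_mono hsub (himg ⟨χ, hχE, rfl⟩)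
    rw [hχy] at hχyc
    rw [_root_.mem_closure_iff] at hχyc
    obtain ⟨x, hxU, hxr⟩ := hχyc U hU hzU
    obtain ⟨n, rfl⟩ := hxr
    exact ⟨n, hxU⟩
  -- compactness: a uniform bound on the return time over the orbit closure
  set Oz : Set Z := closure (Set.range fun n : ℕ => h^[n] z) with hOz
  have hOzc : IsCompact Oz := isClosed_closure.isCompact
  have hcov : Oz ⊆ ⋃ y : Oz, (h^[Classical.choose (horb y.1 y.2)]) ⁻¹' U := by
    intro x hx
    rw [Set.mem_iUnion]
    refine ⟨⟨x, hx⟩, ?_⟩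
    exact Classical.choose_spec (horb x hx)
  obtain ⟨t, ht⟩ := hOzc.elim_finite_subcover _
    (fun y : Oz => (hU.preimage (hc.iterate _))) hcov
  -- K := max over t of the chosen return times, plus one
  set K : ℕ := t.sup (fun y => Classical.choose (horb y.1 y.2)) + 1 with hK
  refine ⟨K, Nat.succ_pos _, fun m => ?_⟩
  have hmem : h^[m] z ∈ Oz := subset_closure ⟨m, rfl⟩
  have := ht hmem
  rw [Set.mem_iUnion₂] at this
  obtain ⟨y, hyt, hy⟩ := this
  set n : ℕ := Classical.choose (horb y.1 y.2) with hn
  refine ⟨m + n, Nat.le_add_right m n, ?_, ?_⟩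
  · have : n ≤ t.sup (fun y => Classical.choose (horb y.1 y.2)) :=
      Finset.le_sup (f := fun y : Oz => Classical.choose (horb y.1 y.2)) hyt
    omega
  · rw [Nat.add_comm m n, Function.iterate_add_apply]
    exact hy

end EllisZorn


section Blocks

/-- rapidly growing block boundaries -/
def eT : ℕ → ℕ
  | 0 => 0
  | (k+1) => (k+1) * (eT k + 1)

lemma eT_lt_succ (k : ℕ) : eT k < eT (k+1) := by
  show eT k < (k+1) * (eT k + 1)
  calc eT k < eT k + 1 := Nat.lt_succ_self _
    _ ≤ (k+1) * (eT k + 1) := Nat.le_mul_of_pos_left _ (Nat.succ_pos k)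

lemma eT_mono : StrictMono eT := strictMono_nat_of_lt_succ eT_lt_succ

lemma le_eT (k : ℕ) : k ≤ eT k := by
  induction k with
  | zero => simp [eT]
  | succ n ih =>
    show n + 1 ≤ (n+1) * (eT n + 1)
    calc n + 1 ≤ (n+1) * 1 := by omega
      _ ≤ (n+1) * (eT n + 1) := Nat.mul_le_mul_left _ (by omega)

lemma sq_le_eT (k : ℕ) : k * k ≤ eT k := by
  induction k with
  | zero => simp [eT]
  | succ n ih =>
    show (n+1) * (n+1) ≤ (n+1) * (eT n + 1)
    apply Nat.mul_le_mul_left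
    have := le_eT n
    nlinarith

lemma two_eT_le (k : ℕ) (hk : 1 ≤ k) : 2 * eT k ≤ eT (k+1) := by
  show 2 * eT k ≤ (k+1) * (eT k + 1)
  nlinarith [Nat.zero_le (eT k)]

/-- the block index of `i` -/
def blk (i : ℕ) : ℕ := Nat.findGreatest (fun k => eT k ≤ i) i

lemma eT_blk_le (i : ℕ) : eT (blk i) ≤ i :=
  Nat.findGreatest_spec (P := fun k => eT k ≤ i) (Nat.zero_le i) (by simp [eT])

lemma lt_eT_blk_succ (i : ℕ) : i < eT (blk i + 1) := by
  by_contra hcon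
  push_neg at hcon
  have h1 : blk i + 1 ≤ i := le_trans (le_eT _) hcon
  exact (Nat.findGreatest_is_greatest (P := fun k => eT k ≤ i) (Nat.lt_succ_self _) h1) hcon

lemma blk_eq (i k : ℕ) (h1 : eT k ≤ i) (h2 : i < eT (k+1)) : blk i = k := by
  rcases lt_trichotomy (blk i) k with h | h | h
  · exfalso
    have : eT (blk i + 1) ≤ eT k := eT_mono.le_iff_le.mpr (Nat.succ_le_of_lt h)
    exact absurd (lt_of_lt_of_le (lt_eT_blk_succ i) this) (not_lt.mpr h1)
  · exact h
  · exfalso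
    have : eT (k + 1) ≤ eT (blk i) := eT_mono.le_iff_le.mpr (Nat.succ_le_of_lt h)
    exact absurd (lt_of_lt_of_le h2 (this.trans (eT_blk_le i))) (lt_irrefl i)

end Blocks


section Counting
open Finset Classical

lemma densityZero_eT_jumps : DensityZero {i : ℕ | ∃ k, i + 1 = eT k} := by
  classical
  apply densityZero_of_bound
  intro m hm n
  rw [cnt_eq_card]
  have hstep : ((Finset.range n).filter (fun i => i ∈ {i : ℕ | ∃ k, i + 1 = eT k})).card ≤
      ((Finset.range (n+1)).filter (fun k => eT k ≤ n)).card := by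
    set F : ℕ → ℕ := fun i => if h : ∃ k, i + 1 = eT k then Classical.choose h else 0 with hF
    apply Finset.card_le_card_of_injOn F
    · intro i hi
      rw [Finset.mem_coe, Finset.mem_filter, Finset.mem_range] at hi
      obtain ⟨hin, hik⟩ := hi
      rw [Finset.mem_coe, Finset.mem_filter, Finset.mem_range]
      have hFi : i + 1 = eT (F i) := by
        simp only [hF]
        rw [dif_pos (show ∃ k, i + 1 = eT k from hik)]
        exact Classical.choose_spec hik
      constructor
      · have : F i ≤ eT (F i) := le_eT _
        omega
      · omega
    · intro i hi j hj hij
      rw [Finset.coe_filter, Set.mem_setOf_eq] at hi hj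
      have hFi : i + 1 = eT (F i) := by
        simp only [hF]
        rw [dif_pos (show ∃ k, i + 1 = eT k from hi.2)]
        exact Classical.choose_spec hi.2
      have hFj : j + 1 = eT (F j) := by
        simp only [hF]
        rw [dif_pos (show ∃ k, j + 1 = eT k from hj.2)]
        exact Classical.choose_spec hj.2
      rw [hij] at hFi
      omega
  have hsub : ((Finset.range (n+1)).filter (fun k => eT k ≤ n)) ⊆
      Finset.range m ∪ Finset.range (n/m + 1) := by
    intro k hk
    rw [Finset.mem_filter] at hk
    rcases lt_or_ge k m with h | h
    · exact Finset.mem_union_left _ (Finset.mem_range.mpr h)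
    · refine Finset.mem_union_right _ (Finset.mem_range.mpr ?_)
      have h1 : k * m ≤ k * k := Nat.mul_le_mul_left k h
      have h2 : k * k ≤ eT k := sq_le_eT k
      have h3 : k * m ≤ n := le_trans (le_trans h1 h2) hk.2
      have : k ≤ n / m := (Nat.le_div_iff_mul_le (by omega)).mpr h3
      omega
  have hcard : ((Finset.range (n+1)).filter (fun k => eT k ≤ n)).card ≤ m + (n/m + 1) := by
    calc ((Finset.range (n+1)).filter (fun k => eT k ≤ n)).card
        ≤ (Finset.range m ∪ Finset.range (n/m + 1)).card := Finset.card_le_card hsub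
      _ ≤ (Finset.range m).card + (Finset.range (n/m + 1)).card := Finset.card_union_le _ _
      _ = m + (n/m + 1) := by simp
  have := le_trans hstep hcard
  have hc : (((Finset.range n).filter (fun i => i ∈ {i : ℕ | ∃ k, i + 1 = eT k})).card : ℝ)
      ≤ (m : ℝ) + ((n/m : ℕ) : ℝ) + 1 := by
    push_cast
    exact_mod_cast by push_cast at this ⊢; linarith [this]
  refine le_trans hc ?_
  have : ((n/m : ℕ) : ℝ) ≤ (n : ℝ) / m := Nat.cast_div_le
  linarith

lemma card_returns_ge {P : ℕ → Prop} [DecidablePred P] {K L : ℕ} (hK : 0 < K)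
    (hsynd : ∀ m, ∃ j, m ≤ j ∧ j < m + K ∧ P j) :
    L / K ≤ ((Finset.range L).filter P).card := by
  classical
  choose jf h1 h2 h3 using hsynd
  have hmaps : ∀ q ∈ Finset.range (L/K), jf (q*K) ∈ (Finset.range L).filter P := by
    intro q hq
    rw [Finset.mem_range] at hq
    refine Finset.mem_filter.mpr ⟨Finset.mem_range.mpr ?_, h3 _⟩
    have hj2 : jf (q*K) < q*K + K := h2 _
    have hq1 : q + 1 ≤ L/K := hq
    calc jf (q*K) < (q+1)*K := by rw [Nat.add_mul, Nat.one_mul]; omega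
      _ ≤ (L/K)*K := Nat.mul_le_mul_right _ hq1
      _ ≤ L := Nat.div_mul_le_self L K
  have hinj : Set.InjOn (fun q => jf (q*K)) (Finset.range (L/K)) := by
    intro q hq q' hq' heq
    simp only at heq
    by_contra hne
    rcases lt_or_gt_of_ne hne with h | h
    · have : jf (q*K) < jf (q'*K) := by
        calc jf (q*K) < q*K + K := h2 _
          _ = (q+1)*K := by rw [Nat.add_mul, Nat.one_mul]
          _ ≤ q'*K := Nat.mul_le_mul_right _ h
          _ ≤ jf (q'*K) := h1 _
      omega
    · have : jf (q'*K) < jf (q*K) := by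
        calc jf (q'*K) < q'*K + K := h2 _
          _ = (q'+1)*K := by rw [Nat.add_mul, Nat.one_mul]
          _ ≤ q*K := Nat.mul_le_mul_right _ h
          _ ≤ jf (q*K) := h1 _
      omega
  calc L / K = (Finset.range (L/K)).card := by simp
    _ ≤ ((Finset.range L).filter P).card := Finset.card_le_card_of_injOn _ hmaps hinj

lemma shift_filter_card_le (B : Set ℕ) (S L : ℕ) [DecidablePred (· ∈ B)] :
    ((Finset.range L).filter (fun j => (S + j) ∈ B)).card ≤
      ((Finset.range (S + L)).filter (fun i => i ∈ B)).card := by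
  apply Finset.card_le_card_of_injOn (fun j => S + j)
  · intro j hj
    simp only [Finset.mem_coe, Finset.mem_filter, Finset.mem_range] at *
    exact ⟨by omega, hj.2⟩
  · intro a _ b _ hab
    simp only at hab
    omega

lemma nat_div_real_lower {L K : ℕ} (hK : 0 < K) : (L:ℝ) - K < K * (↑(L/K) : ℝ) := by
  have hdm := Nat.div_add_mod L K
  have hmod : L % K < K := Nat.mod_lt _ hK
  have h1 : (L:ℝ) = K * ((L/K : ℕ) : ℝ) + ((L % K : ℕ) : ℝ) := by exact_mod_cast hdm.symm
  have h2 : ((L % K : ℕ):ℝ) < K := by exact_mod_cast hmod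
  linarith

end Counting

section Core
variable {Y : Type*} [MetricSpace Y] [CompactSpace Y]

lemma dist_bound_of_compact : ∃ C : ℝ, ∀ x y : Y, dist x y ≤ C := by
  obtain ⟨C, hC⟩ := (Metric.isBounded_iff).mp (isCompact_univ (X := Y)).isBounded
  exact ⟨C, fun x y => hC trivial trivial⟩

end Core

section Core2
variable {X : Type*} [MetricSpace X] [CompactSpace X]

lemma prodMap_iterate (f : X → X) (n : ℕ) :
    (Prod.map f f)^[n] = Prod.map (f^[n]) (f^[n]) := by
  induction n with
  | zero => ext p <;> simp
  | succ n ih =>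
    rw [Function.iterate_succ', Function.iterate_succ', ih]
    ext p <;> simp [Prod.map]

lemma distal_prod (f : X → X)
    (hdistal : ∀ u v : X,
      Filter.liminf (fun n : ℕ => dist (f^[n] u) (f^[n] v)) Filter.atTop = 0 → u = v) :
    ∀ u v : X × X,
      Filter.liminf (fun n : ℕ => dist ((Prod.map f f)^[n] u) ((Prod.map f f)^[n] v))
        Filter.atTop = 0 → u = v := by
  obtain ⟨C, hC⟩ := dist_bound_of_compact (Y := X)
  obtain ⟨C2, hC2⟩ := dist_bound_of_compact (Y := X × X)
  intro u v h
  have coord : ∀ (pr : (X × X) → X), (∀ a b : X × X, dist (pr a) (pr b) ≤ dist a b) →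
      Filter.liminf (fun n : ℕ => dist (f^[n] (pr u)) (f^[n] (pr v))) Filter.atTop = 0 →
        pr u = pr v := fun pr _ h2 => hdistal _ _ h2
  have key : ∀ (pr : (X × X) → X), (∀ n : ℕ, dist (pr ((Prod.map f f)^[n] u))
        (pr ((Prod.map f f)^[n] v)) ≤ dist ((Prod.map f f)^[n] u) ((Prod.map f f)^[n] v)) →
      (∀ n : ℕ, pr ((Prod.map f f)^[n] u) = f^[n] (pr u)) →
      (∀ n : ℕ, pr ((Prod.map f f)^[n] v) = f^[n] (pr v)) →
      pr u = pr v := by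
    intro pr hle hcu hcv
    apply hdistal
    have hub : Filter.IsBoundedUnder (· ≤ ·) Filter.atTop
        (fun n : ℕ => dist (f^[n] (pr u)) (f^[n] (pr v))) :=
      Filter.isBoundedUnder_of ⟨C, fun n => hC _ _⟩
    have hlb : Filter.IsBoundedUnder (· ≥ ·) Filter.atTop
        (fun n : ℕ => dist (f^[n] (pr u)) (f^[n] (pr v))) :=
      Filter.isBoundedUnder_of ⟨0, fun n => dist_nonneg⟩
    have h1 : Filter.liminf (fun n : ℕ => dist (f^[n] (pr u)) (f^[n] (pr v)))
        Filter.atTop ≤ 0 := by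
      rw [← h]
      refine Filter.liminf_le_liminf ?_ ?_ ?_
      · filter_upwards with n
        rw [← hcu n, ← hcv n]
        exact hle n
      · exact hlb
      · exact (Filter.isBoundedUnder_of
          ⟨C2, fun n : ℕ => hC2 ((Prod.map f f)^[n] u) ((Prod.map f f)^[n] v)⟩ :
            Filter.IsBoundedUnder (· ≤ ·) Filter.atTop
              (fun n : ℕ => dist ((Prod.map f f)^[n] u) ((Prod.map f f)^[n] v))).isCoboundedUnder_ge
    have h2 : 0 ≤ Filter.liminf (fun n : ℕ => dist (f^[n] (pr u)) (f^[n] (pr v)))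
        Filter.atTop :=
      Filter.le_liminf_of_le (hub.isCoboundedUnder_ge)
        (Filter.Eventually.of_forall fun n => dist_nonneg)
    linarith
  have h1 : u.1 = v.1 := by
    refine key Prod.fst (fun n => ?_) (fun n => ?_) (fun n => ?_)
    · rw [Prod.dist_eq]; exact le_max_left _ _
    · rw [prodMap_iterate]; rfl
    · rw [prodMap_iterate]; rfl
  have h2 : u.2 = v.2 := by
    refine key Prod.snd (fun n => ?_) (fun n => ?_) (fun n => ?_)
    · rw [Prod.dist_eq]; exact le_max_right _ _
    · rw [prodMap_iterate]; rfl
    · rw [prodMap_iterate]; rfl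
  exact Prod.ext h1 h2

end Core2

section CoreTrans
variable {X : Type*} [MetricSpace X] [CompactSpace X]

lemma core_transitive (f : X → X) (hf : Continuous f)
    (hdistal : ∀ u v : X,
      Filter.liminf (fun n : ℕ => dist (f^[n] u) (f^[n] v)) Filter.atTop = 0 → u = v)
    (hMES : MeanErgodicShadowingDens f)
    (U V : Set (X × X)) (hU : IsOpen U) (hV : IsOpen V)
    (hUne : U.Nonempty) (hVne : V.Nonempty) (N : ℕ) :
    ∃ y ∈ U, ∃ n : ℕ, N ≤ n ∧ 1 ≤ n ∧ (Prod.map f f)^[n] y ∈ V := by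
  classical
  obtain ⟨w, hw⟩ := hUne
  obtain ⟨w', hw'⟩ := hVne
  obtain ⟨rU, hrU, hballU⟩ := Metric.isOpen_iff.mp hU w hw
  obtain ⟨rV, hrV, hballV⟩ := Metric.isOpen_iff.mp hV w' hw'
  set η : ℝ := min rU rV / 2 with hη
  have hηpos : 0 < η := by
    rw [hη]; positivity
  have hg : Continuous (Prod.map f f) := hf.prodMap hf
  have hdist2 := distal_prod f hdistal
  obtain ⟨K, hKpos, hsyndw⟩ :=
    syndetic_return (Prod.map f f) hg hdist2 w (Metric.ball w η) isOpen_ball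
      (Metric.mem_ball_self hηpos)
  obtain ⟨K', hK'pos, hsyndw'⟩ :=
    syndetic_return (Prod.map f f) hg hdist2 w' (Metric.ball w' η) isOpen_ball
      (Metric.mem_ball_self hηpos)
  set K₀ : ℕ := max K K' with hK₀
  have hK₀pos : 0 < K₀ := lt_of_lt_of_le hKpos (le_max_left _ _)
  set ε : ℝ := min η (1 / (8 * (K₀ + 1))) with hεdef
  have hεpos : 0 < ε := by
    rw [hεdef]
    apply lt_min hηpos
    positivity
  obtain ⟨δ, hδpos, hshad⟩ := hMES ε hεpos
  -- the two pseudo-orbits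
  set q1 : ℕ → X := fun k => if k % 2 = 0 then w.1 else w'.1 with hq1
  set q2 : ℕ → X := fun k => if k % 2 = 0 then w.2 else w'.2 with hq2
  set ξ₁ : ℕ → X := fun i => f^[i - eT (blk i)] (q1 (blk i)) with hξ₁
  set ξ₂ : ℕ → X := fun i => f^[i - eT (blk i)] (q2 (blk i)) with hξ₂
  have horbit : ∀ (q : ℕ → X), ∀ i : ℕ, (¬ ∃ k, i + 1 = eT k) →
      f (f^[i - eT (blk i)] (q (blk i))) = f^[(i+1) - eT (blk (i+1))] (q (blk (i+1))) := by
    intro q i hi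
    have h1 : eT (blk i) ≤ i := eT_blk_le i
    have h2 : i < eT (blk i + 1) := lt_eT_blk_succ i
    have h3 : i + 1 < eT (blk i + 1) := by
      rcases Nat.lt_or_ge (i+1) (eT (blk i + 1)) with h | h
      · exact h
      · exfalso
        exact hi ⟨blk i + 1, by omega⟩
    have hblk : blk (i+1) = blk i := blk_eq (i+1) (blk i) (by omega) h3
    rw [hblk]
    have : (i + 1) - eT (blk i) = (i - eT (blk i)) + 1 := by omega
    rw [this, Function.iterate_succ_apply']
  have hjumps : ∀ ξ : ℕ → X, (∀ i : ℕ, (¬ ∃ k, i + 1 = eT k) →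
      f (ξ i) = ξ (i+1)) → ErgodicPseudoOrbit f δ ξ := by
    intro ξ hξ
    unfold ErgodicPseudoOrbit
    apply densityZero_mono (B := {i : ℕ | ∃ k, i + 1 = eT k})
    · intro i hi
      rw [Set.mem_setOf_eq] at hi
      by_contra hcon
      rw [Set.mem_setOf_eq] at hcon
      rw [hξ i hcon] at hi
      simp at hi
      linarith
    · exact densityZero_eT_jumps
  obtain ⟨p₁, hp₁⟩ := hshad ξ₁ (hjumps ξ₁ (fun i hi => horbit q1 i hi))
  obtain ⟨p₂, hp₂⟩ := hshad ξ₂ (hjumps ξ₂ (fun i hi => horbit q2 i hi))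
  set B₁ : Set ℕ := {i | ε ≤ dist (f^[i] p₁) (ξ₁ i)} with hB₁
  set B₂ : Set ℕ := {i | ε ≤ dist (f^[i] p₂) (ξ₂ i)} with hB₂
  obtain ⟨N₁, hN₁⟩ := upperDensity_eventually_bound hp₁
  obtain ⟨N₂, hN₂⟩ := upperDensity_eventually_bound hp₂
  set M : ℕ := 4*K₀ + N₁ + N₂ + 1 with hM
  -- the main block claim
  have main : ∀ k : ℕ, M ≤ k →
      ∃ j, eT k + j < eT (k+1) ∧
        dist (f^[eT k + j] p₁) (f^[j] ((if k % 2 = 0 then w else w').1)) < ε ∧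
        dist (f^[eT k + j] p₂) (f^[j] ((if k % 2 = 0 then w else w').2)) < ε ∧
        (Prod.map f f)^[j] (if k % 2 = 0 then w else w') ∈
          Metric.ball (if k % 2 = 0 then w else w') η := by
    intro k hk
    set z : X × X := if k % 2 = 0 then w else w' with hzdef
    have hsynd : ∀ m, ∃ j, m ≤ j ∧ j < m + K₀ ∧ (Prod.map f f)^[j] z ∈ Metric.ball z η := by
      intro m
      by_cases hk2 : k % 2 = 0
      · obtain ⟨j, h1, h2, h3⟩ := hsyndw m
        refine ⟨j, h1, by omega, ?_⟩
        rw [hzdef, if_pos hk2]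
        exact h3
      · obtain ⟨j, h1, h2, h3⟩ := hsyndw' m
        refine ⟨j, h1, by omega, ?_⟩
        rw [hzdef, if_neg hk2]
        exact h3
    set L : ℕ := eT (k+1) - eT k with hL
    set T' : ℕ := eT (k+1) with hT'
    have hTL : eT k + L = T' := by
      have := (eT_lt_succ k).le
      omega
    have hk1 : 1 ≤ k := by omega
    have hL2 : T' ≤ 2 * L := by
      have h2e : 2 * eT k ≤ eT (k+1) := two_eT_le k hk1
      omega
    have hT'big : 4 * K₀ + 1 ≤ T' := by
      have : k + 1 ≤ eT (k+1) := le_eT (k+1)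
      omega
    set A : Finset ℕ := (Finset.range L).filter
      (fun j => (Prod.map f f)^[j] z ∈ Metric.ball z η) with hA
    set D : Finset ℕ := (Finset.range L).filter
      (fun j => (eT k + j) ∈ B₁ ∨ (eT k + j) ∈ B₂) with hD
    have hAcard : L / K₀ ≤ A.card := card_returns_ge hK₀pos hsynd
    have hDcard : (D.card : ℝ) < 2 * ε * T' := by
      have hsplit : D ⊆ ((Finset.range L).filter (fun j => (eT k + j) ∈ B₁)) ∪
          ((Finset.range L).filter (fun j => (eT k + j) ∈ B₂)) := by
        rw [hD, Finset.filter_or]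
      have hc1 : ((Finset.range L).filter (fun j => (eT k + j) ∈ B₁)).card ≤
          ((Finset.range (eT k + L)).filter (fun i => i ∈ B₁)).card :=
        shift_filter_card_le B₁ (eT k) L
      have hc2 : ((Finset.range L).filter (fun j => (eT k + j) ∈ B₂)).card ≤
          ((Finset.range (eT k + L)).filter (fun i => i ∈ B₂)).card :=
        shift_filter_card_le B₂ (eT k) L
      have hcnt1 : (((Finset.range T').filter (fun i => i ∈ B₁)).card : ℝ) < ε * T' := by
        rw [← cnt_eq_card]
        apply hN₁ T' _ _
        · have : k + 1 ≤ eT (k+1) := le_eT (k+1)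
          omega
        · have : k + 1 ≤ eT (k+1) := le_eT (k+1)
          omega
      have hcnt2 : (((Finset.range T').filter (fun i => i ∈ B₂)).card : ℝ) < ε * T' := by
        rw [← cnt_eq_card]
        apply hN₂ T' _ _
        · have : k + 1 ≤ eT (k+1) := le_eT (k+1)
          omega
        · have : k + 1 ≤ eT (k+1) := le_eT (k+1)
          omega
      rw [hTL] at hc1 hc2
      have hDle : (D.card : ℝ) ≤
          (((Finset.range T').filter (fun i => i ∈ B₁)).card : ℝ) +
          (((Finset.range T').filter (fun i => i ∈ B₂)).card : ℝ) := by
        have := le_trans (Finset.card_le_card hsplit) (Finset.card_union_le _ _)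
        have h2 := le_trans this (Nat.add_le_add hc1 hc2)
        exact_mod_cast h2
      linarith
    have hchain : 2 * ε * T' < ((L / K₀ : ℕ) : ℝ) := by
      have hεK : ε ≤ 1 / (8 * ((K₀:ℝ) + 1)) := by
        rw [hεdef]
        exact min_le_right _ _
      have hK₀R : (0:ℝ) < K₀ := by exact_mod_cast hK₀pos
      have hT'R : (0:ℝ) < T' := by
        have : (1:ℕ) ≤ T' := by omega
        exact_mod_cast by omega
      -- 2 ε T' K₀ ≤ T'/4
      have h1 : 2 * ε * T' * K₀ ≤ (T':ℝ)/4 := by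
        have : 2 * ε * K₀ ≤ 1/4 := by
          have heq : 2 * (1 / (8 * ((K₀:ℝ) + 1))) * K₀ = K₀ / (4 * ((K₀:ℝ)+1)) := by
            field_simp
            ring
          have hle : 2 * (1 / (8 * ((K₀:ℝ) + 1))) * K₀ ≤ 1/4 := by
            rw [heq, div_le_div_iff₀ (by positivity) (by norm_num)]
            nlinarith
          nlinarith [hεpos, hK₀R]
        nlinarith
      -- T'/4 ≤ L - K₀
      have h2 : (T':ℝ)/4 ≤ (L:ℝ) - K₀ := by
        have hL2R : (T':ℝ) ≤ 2 * L := by exact_mod_cast hL2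
        have hKT : 4 * (K₀:ℝ) + 1 ≤ T' := by exact_mod_cast hT'big
        linarith
      have h3 : (L:ℝ) - K₀ < K₀ * ((L / K₀ : ℕ) : ℝ) := nat_div_real_lower hK₀pos
      -- combine : 2εT' * K₀ < K₀ * (L/K₀)
      have h4 : 2 * ε * T' * K₀ < K₀ * ((L / K₀ : ℕ) : ℝ) := by linarith
      have hK₀R' : (0:ℝ) < K₀ := hK₀R
      nlinarith [h4, hK₀R', mul_pos (mul_pos (mul_pos (by norm_num : (0:ℝ) < 2) hεpos) hT'R) hK₀R']
    have hAD : ∃ j ∈ A, j ∉ D := by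
      by_contra hcon
      push_neg at hcon
      have hsub : A ⊆ D := fun j hj => hcon j hj
      have := Finset.card_le_card hsub
      have hAR : ((L / K₀ : ℕ) : ℝ) ≤ (A.card : ℝ) := by exact_mod_cast hAcard
      have hADR : (A.card : ℝ) ≤ (D.card : ℝ) := by exact_mod_cast this
      linarith
    obtain ⟨j, hjA, hjD⟩ := hAD
    rw [hA, Finset.mem_filter, Finset.mem_range] at hjA
    rw [hD, Finset.mem_filter] at hjD
    push_neg at hjD
    have hjD2 := hjD (Finset.mem_range.mpr hjA.1)
    set s : ℕ := eT k + j with hs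
    have hsrange : s < eT (k+1) := by omega
    have hblks : blk s = k := blk_eq s k (by omega) hsrange
    have hsub : s - eT k = j := by omega
    have hnB₁ : dist (f^[s] p₁) (ξ₁ s) < ε := by
      have := hjD2.1
      rw [hB₁, Set.mem_setOf_eq] at this
      push_neg at this
      exact this
    have hnB₂ : dist (f^[s] p₂) (ξ₂ s) < ε := by
      have := hjD2.2
      rw [hB₂, Set.mem_setOf_eq] at this
      push_neg at this
      exact this
    have hξ₁s : ξ₁ s = f^[j] ((if k % 2 = 0 then w else w').1) := by
      rw [hξ₁]
      simp only [hblks, hsub]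
      rw [hq1]
      by_cases hk2 : k % 2 = 0 <;> simp [hk2]
    have hξ₂s : ξ₂ s = f^[j] ((if k % 2 = 0 then w else w').2) := by
      rw [hξ₂]
      simp only [hblks, hsub]
      rw [hq2]
      by_cases hk2 : k % 2 = 0 <;> simp [hk2]
    refine ⟨j, hsrange, ?_, ?_, ?_⟩
    · rw [← hξ₁s]; exact hnB₁
    · rw [← hξ₂s]; exact hnB₂
    · have := hjA.2
      rw [hzdef] at this
      exact this
  -- now pick the two blocks
  set k₀ : ℕ := 2 * M with hk₀def
  have hk₀even : k₀ % 2 = 0 := by omega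
  have hk₀M : M ≤ k₀ := by omega
  obtain ⟨j₀, hj₀range, hj₀1, hj₀2, hj₀ball⟩ := main k₀ hk₀M
  rw [if_pos hk₀even] at hj₀1 hj₀2 hj₀ball
  set s : ℕ := eT k₀ + j₀ with hsdef
  set k₁ : ℕ := 2 * (M + eT (k₀ + 1) + N) + 1 with hk₁def
  have hk₁odd : ¬ (k₁ % 2 = 0) := by omega
  have hk₁M : M ≤ k₁ := by omega
  obtain ⟨j₁, hj₁range, hj₁1, hj₁2, hj₁ball⟩ := main k₁ hk₁M
  rw [if_neg hk₁odd] at hj₁1 hj₁2 hj₁ball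
  set t : ℕ := eT k₁ + j₁ with htdef
  have hts : s + N + 1 ≤ t := by
    have h1 : s < eT (k₀ + 1) := hj₀range
    have h2 : eT k₁ ≤ t := by omega
    have h3 : k₁ ≤ eT k₁ := le_eT k₁
    omega
  -- distances of iterates of w and w'
  have hwcoord : dist (f^[j₀] w.1) w.1 < η ∧ dist (f^[j₀] w.2) w.2 < η := by
    have := hj₀ball
    rw [Metric.mem_ball, prodMap_iterate] at this
    rw [Prod.dist_eq] at this
    exact ⟨lt_of_le_of_lt (le_max_left _ _) this, lt_of_le_of_lt (le_max_right _ _) this⟩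
  have hw'coord : dist (f^[j₁] w'.1) w'.1 < η ∧ dist (f^[j₁] w'.2) w'.2 < η := by
    have := hj₁ball
    rw [Metric.mem_ball, prodMap_iterate] at this
    rw [Prod.dist_eq] at this
    exact ⟨lt_of_le_of_lt (le_max_left _ _) this, lt_of_le_of_lt (le_max_right _ _) this⟩
  have hεη : ε ≤ η := by rw [hεdef]; exact min_le_left _ _
  have hyU : (f^[s] p₁, f^[s] p₂) ∈ U := by
    apply hballU
    rw [Metric.mem_ball, Prod.dist_eq]
    have h1 : dist (f^[s] p₁) w.1 < rU := by
      calc dist (f^[s] p₁) w.1 ≤ dist (f^[s] p₁) (f^[j₀] w.1) + dist (f^[j₀] w.1) w.1 :=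
            dist_triangle _ _ _
        _ < ε + η := add_lt_add hj₀1 hwcoord.1
        _ ≤ 2 * η := by linarith
        _ ≤ rU := by rw [hη]; linarith [min_le_left rU rV]
    have h2 : dist (f^[s] p₂) w.2 < rU := by
      calc dist (f^[s] p₂) w.2 ≤ dist (f^[s] p₂) (f^[j₀] w.2) + dist (f^[j₀] w.2) w.2 :=
            dist_triangle _ _ _
        _ < ε + η := add_lt_add hj₀2 hwcoord.2
        _ ≤ 2 * η := by linarith
        _ ≤ rU := by rw [hη]; linarith [min_le_left rU rV]
    exact max_lt h1 h2
  have hyV : (f^[t] p₁, f^[t] p₂) ∈ V := by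
    apply hballV
    rw [Metric.mem_ball, Prod.dist_eq]
    have h1 : dist (f^[t] p₁) w'.1 < rV := by
      calc dist (f^[t] p₁) w'.1 ≤ dist (f^[t] p₁) (f^[j₁] w'.1) + dist (f^[j₁] w'.1) w'.1 :=
            dist_triangle _ _ _
        _ < ε + η := add_lt_add hj₁1 hw'coord.1
        _ ≤ 2 * η := by linarith
        _ ≤ rV := by rw [hη]; linarith [min_le_right rU rV]
    have h2 : dist (f^[t] p₂) w'.2 < rV := by
      calc dist (f^[t] p₂) w'.2 ≤ dist (f^[t] p₂) (f^[j₁] w'.2) + dist (f^[j₁] w'.2) w'.2 :=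
            dist_triangle _ _ _
        _ < ε + η := add_lt_add hj₁2 hw'coord.2
        _ ≤ 2 * η := by linarith
        _ ≤ rV := by rw [hη]; linarith [min_le_right rU rV]
    exact max_lt h1 h2
  refine ⟨(f^[s] p₁, f^[s] p₂), hyU, t - s, by omega, by omega, ?_⟩
  rw [prodMap_iterate]
  have h1 : f^[t - s] (f^[s] p₁) = f^[t] p₁ := by
    rw [← Function.iterate_add_apply]
    congr 1
    omega
  have h2 : f^[t - s] (f^[s] p₂) = f^[t] p₂ := by
    rw [← Function.iterate_add_apply]
    congr 1
    omega
  show (f^[t-s] (f^[s] p₁), f^[t-s] (f^[s] p₂)) ∈ V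
  rw [h1, h2]
  exact hyV

end CoreTrans

theorem stmt13 {X : Type*} [MetricSpace X] [CompactSpace X] [Nontrivial X]
    (f : X → X) (hf : Continuous f)
    (hdistal : ∀ u v : X,
      Filter.liminf (fun n : ℕ => dist (f^[n] u) (f^[n] v)) Filter.atTop = 0 → u = v) :
    ¬ MeanErgodicShadowingDens f := by
  intro hMES
  classical
  have hg : Continuous (Prod.map f f) := hf.prodMap hf
  obtain ⟨bS, hbc, hbne, hbbasis⟩ := TopologicalSpace.exists_countable_basis (X × X)
  haveI : Countable ↥bS := hbc.to_subtype
  set O : ↥bS × ℕ → Set (X × X) := fun iN =>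
    {y | ∃ n : ℕ, iN.2 ≤ n ∧ 1 ≤ n ∧ (Prod.map f f)^[n] y ∈ iN.1.1} with hO
  have hOopen : ∀ iN, IsOpen (O iN) := by
    intro iN
    have heq : O iN = ⋃ n : ℕ, ⋃ (_ : iN.2 ≤ n ∧ 1 ≤ n), (Prod.map f f)^[n] ⁻¹' iN.1.1 := by
      ext y
      simp only [hO, Set.mem_setOf_eq, Set.mem_iUnion, Set.mem_preimage]
      constructor
      · rintro ⟨n, h1, h2, h3⟩
        exact ⟨n, ⟨h1, h2⟩, h3⟩
      · rintro ⟨n, ⟨h1, h2⟩, h3⟩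
        exact ⟨n, h1, h2, h3⟩
    rw [heq]
    exact isOpen_iUnion fun n => isOpen_iUnion fun _ =>
      (hbbasis.isOpen iN.1.2).preimage (hg.iterate n)
  have hOdense : ∀ iN, Dense (O iN) := by
    rintro ⟨⟨Vb, hVb⟩, N⟩
    rw [dense_iff_inter_open]
    intro W hW hWne
    have hVbne : Vb.Nonempty := by
      rw [Set.nonempty_iff_ne_empty]
      intro hcon
      exact hbne (hcon ▸ hVb)
    obtain ⟨y, hyW, n, hnN, hn1, hgy⟩ :=
      core_transitive f hf hdistal hMES W Vb hW (hbbasis.isOpen hVb) hWne hVbne N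
    exact ⟨y, hyW, n, hnN, hn1, hgy⟩
  have hD : Dense (⋂ iN, O iN) := dense_iInter_of_isOpen hOopen hOdense
  obtain ⟨ystar, hy⟩ := hD.nonempty
  obtain ⟨x, y⟩ := ystar
  have hvisit : ∀ (V : Set (X × X)), IsOpen V → V.Nonempty → ∀ N : ℕ,
      ∃ n, N ≤ n ∧ 1 ≤ n ∧ (Prod.map f f)^[n] (x, y) ∈ V := by
    intro V hVo hVne N
    obtain ⟨v, hv⟩ := hVne
    obtain ⟨Vb, hVbB, hvVb, hVbV⟩ := hbbasis.exists_subset_of_mem_open hv hVo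
    have hmem := Set.mem_iInter.mp hy ⟨⟨Vb, hVbB⟩, N⟩
    obtain ⟨n, h1, h2, h3⟩ := hmem
    exact ⟨n, h1, h2, hVbV h3⟩
  obtain ⟨a, b, hab⟩ := exists_pair_ne X
  have hrpos : 0 < dist a b / 3 := by
    have := dist_pos.mpr hab
    linarith
  have hxy : x ≠ y := by
    intro hcon
    obtain ⟨n, _, _, hmem⟩ := hvisit
      (Metric.ball a (dist a b / 3) ×ˢ Metric.ball b (dist a b / 3))
      (isOpen_ball.prod isOpen_ball)
      ⟨(a, b), Set.mem_prod.mpr ⟨Metric.mem_ball_self hrpos, Metric.mem_ball_self hrpos⟩⟩ 0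
    rw [prodMap_iterate] at hmem
    rw [Set.mem_prod] at hmem
    obtain ⟨hm1, hm2⟩ := hmem
    simp only [Prod.map_fst, Prod.map_snd, Metric.mem_ball] at hm1 hm2
    rw [← hcon] at hm2
    have : dist a b ≤ dist a (f^[n] x) + dist (f^[n] x) b := dist_triangle _ _ _
    rw [dist_comm a (f^[n] x)] at this
    linarith
  obtain ⟨C, hC⟩ := dist_bound_of_compact (Y := X)
  have hlim : Filter.liminf (fun n : ℕ => dist (f^[n] x) (f^[n] y)) Filter.atTop = 0 := by
    apply liminf_eq_zero_of_frequently_small (fun n => dist_nonneg) ⟨C, fun n => hC _ _⟩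
    intro η hη N
    obtain ⟨n, hnN, _, hmem⟩ := hvisit (Metric.ball (a, a) (η / 2)) Metric.isOpen_ball
      ⟨(a, a), Metric.mem_ball_self (by linarith)⟩ N
    rw [prodMap_iterate] at hmem
    rw [Metric.mem_ball] at hmem
    rw [Prod.dist_eq] at hmem
    have h1 : dist (f^[n] x) a < η / 2 := lt_of_le_of_lt (le_max_left _ _) hmem
    have h2 : dist (f^[n] y) a < η / 2 := lt_of_le_of_lt (le_max_right _ _) hmem
    refine ⟨n, hnN, ?_⟩
    calc dist (f^[n] x) (f^[n] y) ≤ dist (f^[n] x) a + dist a (f^[n] y) := dist_triangle _ _ _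
      _ < η := by
          rw [dist_comm a (f^[n] y)]
          linarith
  exact hxy (hdistal x y hlim)
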